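/- Let U₁, V₁ > 0, K ≥ 1 integer, Λ(x,λ)=erf((x-0.5-λ)/√(2λ)). Define M(ξ_R, ξ_FC) = (1/4)[3 + Λ(ξ_R,U₁) + (1-Λ(ξ_R,U₁))·Λ(ξ_FC,V₁)]. Then 0 ≤ M ≤ 1, M is nondecreasing in ξ_R and in ξ_FC, and ∂²(M^K)/∂ξ_R² ≥ 0 on the set {ξ_R ≤ U₁+0.5} and ∂²(M^K)/∂ξ_FC² ≥ 0 on the set {ξ_FC ≤ V₁+0.5}. -/

import Mathlib

/-- The Gauss error function `erf z = (2/√π) ∫_0^z e^{-t²} dt`. -/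
noncomputable def erf (z : ℝ) : ℝ := (2 / Real.sqrt Real.pi) * ∫ t in (0:ℝ)..z, Real.exp (-t ^ 2)

/-- `Λ(x,λ)`: the Gaussian (continuity-corrected) approximation of the Poisson CDF. -/
noncomputable def Lam (x lam : ℝ) : ℝ := erf ((x - 0.5 - lam) / Real.sqrt (2 * lam))

/-- Upper bound `P̃⁺_md` on the end-to-end missed-detection probability. -/
noncomputable def M (U₁ V₁ ξR ξFC : ℝ) : ℝ :=
  (1 / 4) * (3 + Lam ξR U₁ + (1 - Lam ξR U₁) * Lam ξFC V₁)

open MeasureTheory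

lemma contg : Continuous (fun t : ℝ => Real.exp (-t ^ 2)) := by continuity

lemma hasDerivAt_erf (z : ℝ) :
    HasDerivAt erf (2 / Real.sqrt Real.pi * Real.exp (-z ^ 2)) z := by
  have h : HasDerivAt (fun u => ∫ t in (0:ℝ)..u, Real.exp (-t ^ 2)) (Real.exp (-z ^ 2)) z :=
    intervalIntegral.integral_hasDerivAt_right (contg.intervalIntegrable _ _)
      (contg.stronglyMeasurableAtFilter _ _) contg.continuousAt
  have h2 := h.const_mul (2 / Real.sqrt Real.pi)
  exact h2

lemma integral_g_nonneg {z : ℝ} (hz : 0 ≤ z) : 0 ≤ ∫ t in (0:ℝ)..z, Real.exp (-t ^ 2) :=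
  intervalIntegral.integral_nonneg hz (fun t _ => (Real.exp_pos _).le)

lemma integral_g_le {z : ℝ} (hz : 0 ≤ z) :
    (∫ t in (0:ℝ)..z, Real.exp (-t ^ 2)) ≤ Real.sqrt Real.pi / 2 := by
  have hint : IntegrableOn (fun t : ℝ => Real.exp (-t ^ 2)) (Set.Ioi 0) := by
    have := (integrable_exp_neg_mul_sq (b := (1:ℝ)) one_pos).integrableOn (s := Set.Ioi 0)
    simpa using this
  rw [intervalIntegral.integral_of_le hz]
  have h2 : (∫ t in Set.Ioc (0:ℝ) z, Real.exp (-t ^ 2)) ≤ ∫ t in Set.Ioi (0:ℝ), Real.exp (-t ^ 2) := by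
    apply setIntegral_mono_set hint
    · filter_upwards with t using (Real.exp_pos _).le
    · exact Set.Ioc_subset_Ioi_self.eventuallyLE
  have h3 : (∫ t in Set.Ioi (0:ℝ), Real.exp (-t ^ 2)) = Real.sqrt Real.pi / 2 := by
    have := integral_gaussian_Ioi 1
    simpa using this
  linarith

lemma integral_g_neg (z : ℝ) :
    (∫ t in (0:ℝ)..(-z), Real.exp (-t ^ 2)) = -∫ t in (0:ℝ)..z, Real.exp (-t ^ 2) := by
  have h := intervalIntegral.integral_comp_neg (a := (0:ℝ)) (b := z)
      (fun t => Real.exp (-t ^ 2))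
  simp only [neg_neg, neg_zero, neg_sq] at h
  have h2 := intervalIntegral.integral_symm (f := fun t : ℝ => Real.exp (-t ^ 2))
      (μ := volume) 0 (-z)
  linarith

lemma abs_integral_g_le (z : ℝ) :
    |∫ t in (0:ℝ)..z, Real.exp (-t ^ 2)| ≤ Real.sqrt Real.pi / 2 := by
  rcases le_or_gt 0 z with hz | hz
  · rw [abs_of_nonneg (integral_g_nonneg hz)]; exact integral_g_le hz
  · have hz' : (0:ℝ) ≤ -z := by linarith
    have h1 := integral_g_le hz'
    have h0 := integral_g_nonneg hz'
    have hodd := integral_g_neg z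
    rw [abs_of_nonpos (by linarith)]
    linarith

lemma abs_erf_le_one (z : ℝ) : |erf z| ≤ 1 := by
  have hπ : 0 < Real.sqrt Real.pi := Real.sqrt_pos.mpr Real.pi_pos
  have h := abs_integral_g_le z
  have hval : 2 / Real.sqrt Real.pi * (Real.sqrt Real.pi / 2) = 1 := by field_simp
  unfold erf
  rw [abs_mul, abs_of_nonneg (by positivity : (0:ℝ) ≤ 2 / Real.sqrt Real.pi)]
  calc 2 / Real.sqrt Real.pi * |∫ t in (0:ℝ)..z, Real.exp (-t ^ 2)|
      ≤ 2 / Real.sqrt Real.pi * (Real.sqrt Real.pi / 2) := by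
        exact mul_le_mul_of_nonneg_left h (by positivity)
    _ = 1 := hval

lemma erf_le_one (z : ℝ) : erf z ≤ 1 := (abs_le.mp (abs_erf_le_one z)).2

lemma neg_one_le_erf (z : ℝ) : -1 ≤ erf z := (abs_le.mp (abs_erf_le_one z)).1

lemma erf_monotone : Monotone erf := by
  intro a b hab
  unfold erf
  have hadd := intervalIntegral.integral_add_adjacent_intervals
      (contg.intervalIntegrable (μ := volume) 0 a) (contg.intervalIntegrable a b)
  have hab2 : (0:ℝ) ≤ ∫ t in a..b, Real.exp (-t ^ 2) :=
    intervalIntegral.integral_nonneg hab (fun t _ => (Real.exp_pos _).le)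
  have h : (∫ t in (0:ℝ)..a, Real.exp (-t ^ 2)) ≤ ∫ t in (0:ℝ)..b, Real.exp (-t ^ 2) := by
    linarith
  exact mul_le_mul_of_nonneg_left h (by positivity)

lemma Lam_le_one (x lam : ℝ) : Lam x lam ≤ 1 := erf_le_one _

lemma neg_one_le_Lam (x lam : ℝ) : -1 ≤ Lam x lam := neg_one_le_erf _

lemma Lam_mono {lam : ℝ} (hlam : 0 < lam) : Monotone (fun x => Lam x lam) := by
  intro a b hab
  have hs : 0 < Real.sqrt (2 * lam) := Real.sqrt_pos.mpr (by linarith)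
  apply erf_monotone
  gcongr

lemma key_second_deriv (a c lam : ℝ) (ha : 0 ≤ a) (hlam : 0 < lam) (K : ℕ)
    (f : ℝ → ℝ) (hf : f = fun t => c + a * Lam t lam)
    (hf0 : ∀ t, 0 ≤ f t) (x : ℝ) (hx : x ≤ lam + 0.5) :
    0 ≤ deriv (deriv (fun t => f t ^ K)) x := by
  set s : ℝ := Real.sqrt (2 * lam) with hs_def
  have hs : 0 < s := Real.sqrt_pos.mpr (by linarith)
  have hinner : ∀ t : ℝ, HasDerivAt (fun u => (u - 0.5 - lam) / s) (1 / s) t := by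
    intro t
    have := (((hasDerivAt_id t).sub_const (0.5:ℝ)).sub_const lam).div_const s
    simpa using this
  set F : ℝ → ℝ := fun t => a * (2 / Real.sqrt Real.pi * Real.exp (-((t - 0.5 - lam) / s) ^ 2)
      * (1 / s)) with hF_def
  have hF : ∀ t : ℝ, HasDerivAt f (F t) t := by
    intro t
    have h := (((hasDerivAt_erf ((t - 0.5 - lam) / s)).comp t (hinner t)).const_mul a).const_add c
    have hfun : (fun y => c + a * (erf ∘ fun u => (u - 0.5 - lam) / s) y)
        = f := by
      funext y; simp [hf, Lam, Function.comp, hs_def]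
    rw [hfun] at h
    convert h using 1
    try (simp only [hF_def]; ring)
  have hFnonneg : ∀ t, 0 ≤ F t := by
    intro t
    have : (0:ℝ) < Real.sqrt Real.pi := Real.sqrt_pos.mpr Real.pi_pos
    positivity
  have hf0' : ∀ t, 0 ≤ f t := hf0
  -- first derivative of f^K
  have hP : deriv (fun t => f t ^ K) = fun t => (K:ℝ) * f t ^ (K - 1) * F t := by
    funext t
    exact ((hF t).pow K).deriv
  rw [hP]
  -- derivative of F at x
  have hE : HasDerivAt F
      (a * (2 / Real.sqrt Real.pi *
        (Real.exp (-((x - 0.5 - lam) / s) ^ 2) *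
          -(((2:ℕ):ℝ) * ((x - 0.5 - lam) / s) ^ (2 - 1) * (1 / s))) * (1 / s))) x := by
    have h1 : HasDerivAt (fun u : ℝ => -((u - 0.5 - lam) / s) ^ 2)
        (-(((2:ℕ):ℝ) * ((x - 0.5 - lam) / s) ^ (2 - 1) * (1 / s))) x := ((hinner x).pow 2).neg
    have h2 := h1.exp
    have h3 := (h2.mul_const (1 / s)).const_mul (2 / Real.sqrt Real.pi)
    have h4 := h3.const_mul a
    convert h4 using 2
    all_goals (try simp only [hF_def])
    all_goals (try ring)
    all_goals rfl
  -- product rule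
  have hg1 : HasDerivAt (fun t => (K:ℝ) * f t ^ (K - 1))
      ((K:ℝ) * (((K - 1 : ℕ):ℝ) * f x ^ (K - 1 - 1) * F x)) x :=
    ((hF x).pow (K - 1)).const_mul (K:ℝ)
  have hprod := hg1.mul hE
  rw [show (fun t => (K:ℝ) * f t ^ (K - 1) * F t) = (fun t => (K:ℝ) * f t ^ (K - 1)) * F from rfl,
    hprod.deriv]
  have hz : ((x - 0.5 - lam) / s) ≤ 0 := by
    apply div_nonpos_of_nonpos_of_nonneg _ hs.le
    have : (0.5:ℝ) = 0.5 := rfl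
    linarith
  have hE' : 0 ≤ a * (2 / Real.sqrt Real.pi *
        (Real.exp (-((x - 0.5 - lam) / s) ^ 2) *
          -(((2:ℕ):ℝ) * ((x - 0.5 - lam) / s) ^ (2 - 1) * (1 / s))) * (1 / s)) := by
    have hπ : (0:ℝ) < Real.sqrt Real.pi := Real.sqrt_pos.mpr Real.pi_pos
    have h6 : (0:ℝ) ≤ -(((2:ℕ):ℝ) * ((x - 0.5 - lam) / s) ^ (2 - 1) * (1 / s)) := by
      simp only [show (2-1 : ℕ) = 1 from rfl, pow_one]
      have : ((2:ℕ):ℝ) * ((x - 0.5 - lam) / s) * (1 / s) ≤ 0 := by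
        apply mul_nonpos_of_nonpos_of_nonneg
        · exact mul_nonpos_of_nonneg_of_nonpos (by norm_num) hz
        · positivity
      linarith
    have hexp : (0:ℝ) ≤ Real.exp (-((x - 0.5 - lam) / s) ^ 2) := (Real.exp_pos _).le
    have := mul_nonneg hexp h6
    positivity
  have t1 : 0 ≤ (K:ℝ) * (((K - 1 : ℕ):ℝ) * f x ^ (K - 1 - 1) * F x) * F x := by
    have := hf0 x
    have := hFnonneg x
    positivity
  have t2 : 0 ≤ (K:ℝ) * f x ^ (K - 1) * (a * (2 / Real.sqrt Real.pi *
        (Real.exp (-((x - 0.5 - lam) / s) ^ 2) *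
          -(((2:ℕ):ℝ) * ((x - 0.5 - lam) / s) ^ (2 - 1) * (1 / s))) * (1 / s))) := by
    apply mul_nonneg _ hE'
    have := hf0 x
    positivity
  linarith


theorem Pmd_upper_bound_properties (U₁ V₁ : ℝ) (hU : 0 < U₁) (hV : 0 < V₁)
    (K : ℕ) (hK : 1 ≤ K) :
    (∀ ξR ξFC : ℝ, 0 ≤ M U₁ V₁ ξR ξFC ∧ M U₁ V₁ ξR ξFC ≤ 1) ∧
    (∀ ξFC : ℝ, Monotone (fun ξR => M U₁ V₁ ξR ξFC)) ∧
    (∀ ξR : ℝ, Monotone (fun ξFC => M U₁ V₁ ξR ξFC)) ∧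
    (∀ ξFC : ℝ, ∀ ξR ≤ U₁ + 0.5, 0 ≤ deriv (deriv (fun t => M U₁ V₁ t ξFC ^ K)) ξR) ∧
    (∀ ξR : ℝ, ∀ ξFC ≤ V₁ + 0.5, 0 ≤ deriv (deriv (fun t => M U₁ V₁ ξR t ^ K)) ξFC) := by
  have hbound : ∀ ξR ξFC : ℝ, 0 ≤ M U₁ V₁ ξR ξFC ∧ M U₁ V₁ ξR ξFC ≤ 1 := by
    intro ξR ξFC
    have h1 := Lam_le_one ξR U₁
    have h2 := neg_one_le_Lam ξR U₁
    have h3 := Lam_le_one ξFC V₁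
    have h4 := neg_one_le_Lam ξFC V₁
    constructor
    · unfold M
      nlinarith [mul_nonneg (by linarith : (0:ℝ) ≤ 1 - Lam ξR U₁)
        (by linarith : (0:ℝ) ≤ Lam ξFC V₁ + 1)]
    · unfold M
      nlinarith [mul_nonneg (by linarith : (0:ℝ) ≤ 1 - Lam ξR U₁)
        (by linarith : (0:ℝ) ≤ 1 - Lam ξFC V₁)]
  refine ⟨hbound, ?_, ?_, ?_, ?_⟩
  · intro ξFC x y hxy
    have h1 : Lam x U₁ ≤ Lam y U₁ := Lam_mono hU hxy
    have h3 := Lam_le_one ξFC V₁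
    simp only [M]
    nlinarith [mul_nonneg (by linarith : (0:ℝ) ≤ Lam y U₁ - Lam x U₁)
      (by linarith : (0:ℝ) ≤ 1 - Lam ξFC V₁)]
  · intro ξR x y hxy
    have h1 : Lam x V₁ ≤ Lam y V₁ := Lam_mono hV hxy
    have h3 := Lam_le_one ξR U₁
    simp only [M]
    nlinarith [mul_nonneg (by linarith : (0:ℝ) ≤ 1 - Lam ξR U₁)
      (by linarith : (0:ℝ) ≤ Lam y V₁ - Lam x V₁)]
  · intro ξFC x hx
    have h3 := Lam_le_one ξFC V₁
    apply key_second_deriv ((1 - Lam ξFC V₁) / 4) ((3 + Lam ξFC V₁) / 4) U₁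
      (by linarith) hU K _ _ (fun t => (hbound t ξFC).1) x (by linarith)
    funext t
    simp only [M]
    ring
  · intro ξR x hx
    have h3 := Lam_le_one ξR U₁
    apply key_second_deriv ((1 - Lam ξR U₁) / 4) ((3 + Lam ξR U₁) / 4) V₁
      (by linarith) hV K _ _ (fun t => (hbound ξR t).1) x (by linarith)
    funext t
    simp only [M]
    ring
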